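/- arXiv:1909.02299 — 3 statements merged into one kernel-verified Lean document; each statement's English description precedes it below -/
import Mathlib

section
/- Let M be a metric space, F a set of continuous functions M → ℂ that is equicontinuous on each compact subset and uniformly bounded on each compact subset, and let P^k be defined as P^k f(x) = ∑_t f(t) η^k_t(x) from locally finite partitions of unity subordinated to covers by balls of radius 1/k. Then sup_{f∈F} sup_{x∈T} |P^k f(x) − f(x)| → 0 as k → ∞ for every compact T ⊆ M. -/
/-- If `F` is a set of continuous functions `M → ℂ`, equicontinuous and uniformly bounded
on each compact subset, and `P^k f x = ∑ t, f t * η^k t x` comes from locally finite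
partitions of unity subordinated to covers by balls of radius `1/k`, then
`sup_{f ∈ F} sup_{x ∈ T} |P^k f x − f x| → 0` as `k → ∞` for every compact `T`. -/
theorem partition_operators_tendsto_uniformly_on_totally_bounded
    {M : Type*} [MetricSpace M] (η : ℕ → M → M → ℝ)
    (hcont : ∀ k, 1 ≤ k → ∀ t, Continuous (η k t))
    (hnonneg : ∀ k, 1 ≤ k → ∀ t x, 0 ≤ η k t x)
    (hle : ∀ k, 1 ≤ k → ∀ t x, η k t x ≤ 1)
    (hlf : ∀ k, 1 ≤ k → LocallyFinite fun t => Function.support (η k t))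
    (hsum : ∀ k, 1 ≤ k → ∀ x, ∑ᶠ t, η k t x = 1)
    (hsupp : ∀ k, 1 ≤ k → ∀ t, Function.support (η k t) ⊆ Metric.ball t (1 / (k : ℝ)))
    (F : Set (M → ℂ)) (hFc : ∀ f ∈ F, Continuous f)
    (hEq : ∀ K : Set M, IsCompact K → ∀ x ∈ K,
      EquicontinuousAt (fun f : F => (f : M → ℂ)) x)
    (hBd : ∀ K : Set M, IsCompact K → ∃ C : ℝ, ∀ f ∈ F, ∀ x ∈ K, ‖f x‖ ≤ C) :
    ∀ T : Set M, IsCompact T → ∀ ε > (0 : ℝ), ∃ N : ℕ, ∀ k ≥ N, 1 ≤ k →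
      ∀ f ∈ F, ∀ x ∈ T, ‖(∑ᶠ t, f t * (η k t x : ℂ)) - f x‖ < ε := by
  intro T hT ε hε
  -- δ from equicontinuity at each point of T
  have key : ∀ x : M, ∃ δ : ℝ, 0 < δ ∧ (x ∈ T →
      ∀ y, dist y x < δ → ∀ f ∈ F, ‖f y - f x‖ < ε / 4) := by
    intro x
    by_cases hx : x ∈ T
    · have h := hEq T hT x hx
      rw [Metric.equicontinuousAt_iff] at h
      obtain ⟨δ, hδ, hδ'⟩ := h (ε / 4) (by linarith)
      refine ⟨δ, hδ, fun _ y hy f hf => ?_⟩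
      have := hδ' y hy ⟨f, hf⟩
      rwa [dist_comm, Complex.dist_eq] at this
    · exact ⟨1, one_pos, fun h => absurd h hx⟩
  choose δ hδpos hδ using key
  obtain ⟨s, hsT, hscov⟩ := hT.elim_nhds_subcover (fun c => Metric.ball c (δ c / 2))
    (fun c hc => Metric.ball_mem_nhds c (by have := hδpos c; positivity))
  by_cases hs : s.Nonempty
  swap
  · refine ⟨1, fun k hk hk1 f hf x hx => absurd (hscov hx) ?_⟩
    simp [Finset.not_nonempty_iff_eq_empty.mp hs]
  set δ₀ := s.inf' hs (fun c => δ c / 2) with hδ₀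
  have hδ₀pos : 0 < δ₀ := by
    rw [hδ₀, Finset.lt_inf'_iff]
    intro c hc
    have := hδpos c; linarith
  obtain ⟨n, hn⟩ := exists_nat_one_div_lt hδ₀pos
  refine ⟨n + 1, fun k hk hk1 f hf x hx => ?_⟩
  -- 1/k < δ₀
  have hkpos : (0 : ℝ) < k := by exact_mod_cast hk1
  have h1k : 1 / (k : ℝ) < δ₀ := by
    have h1 : 1 / (k : ℝ) ≤ 1 / ((n : ℝ) + 1) := by
      apply one_div_le_one_div_of_le (by positivity)
      exact_mod_cast hk
    linarith
  -- finite support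
  have hfin : (Function.support fun t => η k t x).Finite := (hlf k hk1).point_finite x
  set ft := hfin.toFinset with hft
  have hsub : (Function.support fun t => η k t x) ⊆ ↑ft := by
    simp [hft]
  have hsum' : ∑ t ∈ ft, η k t x = 1 := by
    rw [← finsum_eq_sum_of_support_subset _ hsub]
    exact hsum k hk1 x
  have hP : (∑ᶠ t, f t * (η k t x : ℂ)) = ∑ t ∈ ft, f t * (η k t x : ℂ) := by
    apply finsum_eq_sum_of_support_subset
    intro t ht
    apply hsub
    intro h0
    apply ht
    simp [Function.mem_support] at h0 ⊢
    simp [h0]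
  have hfx : f x = ∑ t ∈ ft, f x * (η k t x : ℂ) := by
    rw [← Finset.mul_sum]
    have : (∑ t ∈ ft, ((η k t x : ℝ) : ℂ)) = ((∑ t ∈ ft, η k t x : ℝ) : ℂ) := by
      push_cast; ring
    rw [this, hsum']
    simp
  rw [hP, hfx, ← Finset.sum_sub_distrib]
  have hterm : ∀ t ∈ ft, ‖f t * (η k t x : ℂ) - f x * (η k t x : ℂ)‖ ≤ (ε / 2) * η k t x := by
    intro t ht
    have hη : η k t x ≠ 0 := by simpa [hft, Function.mem_support] using ht
    have hxball : x ∈ Metric.ball t (1 / (k : ℝ)) := hsupp k hk1 t hη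
    have hdxt : dist x t < 1 / (k : ℝ) := Metric.mem_ball.mp hxball
    -- find a center
    obtain ⟨c, hc, hxc⟩ := Set.mem_iUnion₂.mp (hscov hx)
    have hxc' : dist x c < δ c / 2 := Metric.mem_ball.mp hxc
    have hinf : δ₀ ≤ δ c / 2 := Finset.inf'_le _ hc
    have htc : dist t c < δ c := by
      calc dist t c ≤ dist t x + dist x c := dist_triangle t x c
        _ < 1 / (k : ℝ) + δ c / 2 := by rw [dist_comm t x]; linarith
        _ ≤ δ c / 2 + δ c / 2 := by linarith
        _ = δ c := by ring
    have h1 : ‖f t - f c‖ < ε / 4 := hδ c (hsT c hc) t htc f hf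
    have h2 : ‖f x - f c‖ < ε / 4 := hδ c (hsT c hc) x (by linarith) f hf
    have hdiff : ‖f t - f x‖ ≤ ε / 2 := by
      calc ‖f t - f x‖ = ‖(f t - f c) - (f x - f c)‖ := by ring_nf
        _ ≤ ‖f t - f c‖ + ‖f x - f c‖ := norm_sub_le _ _
        _ ≤ ε / 2 := by linarith
    calc ‖f t * (η k t x : ℂ) - f x * (η k t x : ℂ)‖
        = ‖f t - f x‖ * ‖((η k t x : ℝ) : ℂ)‖ := by rw [← sub_mul, norm_mul]
      _ = ‖f t - f x‖ * η k t x := by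
          rw [Complex.norm_real, Real.norm_eq_abs, abs_of_nonneg (hnonneg k hk1 t x)]
      _ ≤ (ε / 2) * η k t x := by
          exact mul_le_mul_of_nonneg_right hdiff (hnonneg k hk1 t x)
  calc ‖∑ t ∈ ft, (f t * (η k t x : ℂ) - f x * (η k t x : ℂ))‖
      ≤ ∑ t ∈ ft, ‖f t * (η k t x : ℂ) - f x * (η k t x : ℂ)‖ := norm_sum_le _ _
    _ ≤ ∑ t ∈ ft, (ε / 2) * η k t x := Finset.sum_le_sum hterm
    _ = (ε / 2) * ∑ t ∈ ft, η k t x := by rw [Finset.mul_sum]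
    _ = ε / 2 := by rw [hsum']; ring
    _ < ε := by linarith
end

section
/- Let M be a metric space. Then the identity operator on C(M) (with the topology of uniform convergence on compact sets) is a limit of finite-rank continuous linear operators, uniformly on sets F ⊆ C(M) that are equicontinuous and uniformly bounded on each compact subset of M: for every such F, every compact T ⊆ M, and every ε > 0, there exists a finite-rank continuous linear operator Q : C(M) → C(M) with sup_{f∈F} sup_{x∈T} |Qf(x) − f(x)| < ε. -/
/-- The identity operator on `C(M, ℂ)` (compact-open topology, i.e. uniform convergence
on compacts) is a limit of finite-rank continuous linear operators, uniformly on sets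
`F` that are equicontinuous and uniformly bounded on each compact subset of `M`. -/
theorem identity_approx_by_finite_rank
    {M : Type*} [MetricSpace M]
    (F : Set C(M, ℂ))
    (hEq : ∀ K : Set M, IsCompact K → ∀ x ∈ K,
      EquicontinuousAt (fun f : F => ((f : C(M, ℂ)) : M → ℂ)) x)
    (hBd : ∀ K : Set M, IsCompact K → ∃ C : ℝ, ∀ f ∈ F, ∀ x ∈ K, ‖f x‖ ≤ C)
    (T : Set M) (hT : IsCompact T) (ε : ℝ) (hε : 0 < ε) :
    ∃ Q : C(M, ℂ) →L[ℂ] C(M, ℂ),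
      (∃ V : Submodule ℂ C(M, ℂ), FiniteDimensional ℂ V ∧
        LinearMap.range (Q : C(M, ℂ) →ₗ[ℂ] C(M, ℂ)) ≤ V) ∧
      ∀ f ∈ F, ∀ x ∈ T, ‖Q f x - f x‖ < ε := by
  classical
  -- Step 1: uniform equicontinuity radii
  have key : ∀ t ∈ T, ∃ δ > 0, ∀ y ∈ Metric.ball t δ, ∀ f ∈ F, ‖f y - f t‖ < ε / 2 := by
    intro t ht
    have h := hEq T hT t ht
    have h2 := h {p : ℂ × ℂ | dist p.1 p.2 < ε / 2}
      (Metric.dist_mem_uniformity (by linarith))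
    rw [Metric.eventually_nhds_iff_ball] at h2
    obtain ⟨δ, hδ, hδ'⟩ := h2
    refine ⟨δ, hδ, fun y hy f hf => ?_⟩
    have := hδ' y hy ⟨f, hf⟩
    simpa [dist_eq_norm, norm_sub_rev] using this
  choose! δ hδpos hδ using key
  -- Step 2: finite subcover
  have hcover : T ⊆ ⋃ t ∈ T, Metric.ball t (δ t) := fun x hx =>
    Set.mem_iUnion₂.2 ⟨x, hx, Metric.mem_ball_self (hδpos x hx)⟩
  obtain ⟨s, hs_sub, hs_fin, hs_cover⟩ :=
    hT.elim_finite_subcover_image (fun t _ => Metric.isOpen_ball) hcover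
  haveI : Fintype s := hs_fin.fintype
  -- Step 3: partition of unity
  obtain ⟨ρ, hρ⟩ := PartitionOfUnity.exists_isSubordinate (ι := s) (s := T) hT.isClosed
    (fun i => Metric.ball (i : M) (δ i)) (fun i => Metric.isOpen_ball)
    (by simpa [Set.iUnion_coe_set] using hs_cover)
  -- complex-valued bump functions
  set g : s → C(M, ℂ) := fun i =>
    ⟨fun x => ((ρ i x : ℝ) : ℂ), Complex.continuous_ofReal.comp (ρ i).continuous⟩ with hg
  -- Step 4: the operator
  let L : C(M, ℂ) →ₗ[ℂ] C(M, ℂ) :=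
    { toFun := fun f => ∑ i : s, f (i : M) • g i
      map_add' := by
        intro f₁ f₂
        rw [← Finset.sum_add_distrib]
        exact Finset.sum_congr rfl fun i _ => by ext y; simp [add_mul]
      map_smul' := by
        intro c f
        simp [smul_smul, Finset.smul_sum] }
  have hsmulcont : ∀ i : s, Continuous fun c : ℂ => c • g i := by
    intro i
    apply ContinuousMap.continuous_of_continuous_uncurry
    exact continuous_fst.smul ((g i).continuous.comp continuous_snd)
  have hLcont : Continuous L := by
    apply continuous_finset_sum
    intro i _
    exact (hsmulcont i).comp (continuous_eval_const (i : M))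
  refine ⟨⟨L, hLcont⟩, ⟨Submodule.span ℂ (Set.range g), ?_, ?_⟩, ?_⟩
  · exact FiniteDimensional.span_of_finite ℂ (Set.finite_range g)
  · rintro h ⟨f, rfl⟩
    exact Submodule.sum_mem _ fun i _ =>
      Submodule.smul_mem _ _ (Submodule.subset_span ⟨i, rfl⟩)
  · intro f hf x hx
    have hsum : ∑ i : s, ρ i x = 1 := by
      have := ρ.sum_eq_one hx
      rwa [finsum_eq_sum_of_fintype] at this
    have hQ : (L f) x = ∑ i : s, f (i : M) * ((ρ i x : ℝ) : ℂ) := by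
      simp [L, hg]
    have hdiff : (L f) x - f x = ∑ i : s, (f (i : M) - f x) * ((ρ i x : ℝ) : ℂ) := by
      have h1 : ∑ i : s, (f (i : M) - f x) * ((ρ i x : ℝ) : ℂ)
          = (∑ i : s, f (i : M) * ((ρ i x : ℝ) : ℂ)) - f x * ∑ i : s, ((ρ i x : ℝ) : ℂ) := by
        rw [Finset.mul_sum, ← Finset.sum_sub_distrib]
        exact Finset.sum_congr rfl fun i _ => by ring
      rw [hQ, h1, ← Complex.ofReal_sum, hsum]
      norm_num
    have hterm : ∀ i : s, ‖(f (i : M) - f x) * ((ρ i x : ℝ) : ℂ)‖ ≤ (ε / 2) * ρ i x := by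
      intro i
      rcases eq_or_ne (ρ i x) 0 with h0 | h0
      · simp [h0]
      · have hxball : x ∈ Metric.ball (i : M) (δ i) :=
          hρ i (subset_tsupport _ h0)
        have hlt : ‖f x - f (i : M)‖ < ε / 2 :=
          hδ (i : M) (hs_sub i.2) x hxball f hf
        have hρnn : 0 ≤ ρ i x := ρ.nonneg i x
        rw [norm_mul, Complex.norm_real, Real.norm_of_nonneg hρnn]
        apply mul_le_mul_of_nonneg_right _ hρnn
        rw [norm_sub_rev]
        exact hlt.le
    calc ‖(L f) x - f x‖ ≤ ∑ i : s, ‖(f (i : M) - f x) * ((ρ i x : ℝ) : ℂ)‖ := by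
          rw [hdiff]; exact norm_sum_le _ _
      _ ≤ ∑ i : s, (ε / 2) * ρ i x := Finset.sum_le_sum fun i _ => hterm i
      _ = ε / 2 := by rw [← Finset.mul_sum, hsum, mul_one]
      _ < ε := by linarith
end

section
/- Let M be a metric space, F ⊆ C(M) equicontinuous and uniformly bounded on each compact subset, and let P^k be the partition-of-unity operators P^k f = ∑_t f(t) η^k_t subordinated to covers by balls of radius 1/k. Then the set ⋃_{k≥1} {P^k f − f : f ∈ F} ∪ {0} is totally bounded in C(M) with the topology of uniform convergence on compacts. -/
section Aux

lemma net_lemma {M : Type*} [MetricSpace M] (K : Set M) (hK : IsCompact K)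
    (G : Set (M → ℂ))
    (heq : ∀ x ∈ K, ∀ ε : ℝ, 0 < ε → ∃ δ > 0, ∀ g ∈ G, ∀ y, dist y x < δ → ‖g y - g x‖ ≤ ε)
    (hbd : ∀ x ∈ K, ∃ C : ℝ, ∀ g ∈ G, ‖g x‖ ≤ C)
    {ε : ℝ} (hε : 0 < ε) :
    ∃ S : Set (M → ℂ), S.Finite ∧ ∀ g ∈ G, ∃ h ∈ S, ∀ x ∈ K, ‖g x - h x‖ ≤ ε := by
  have hε3 : 0 < ε / 3 := by positivity
  have heq3 : ∀ x ∈ K, ∃ δ > 0, ∀ g ∈ G, ∀ y, dist y x < δ → ‖g y - g x‖ ≤ ε / 3 :=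
    fun x hx => heq x hx _ hε3
  choose! δ hδpos hδ using heq3
  choose! C hC using hbd
  obtain ⟨t, htK, hcover⟩ := hK.elim_nhds_subcover (fun x => Metric.ball x (δ x))
    (fun x hx => Metric.ball_mem_nhds _ (hδpos x hx))
  set Φ : (M → ℂ) → (t → ℂ) := fun g i => g i with hΦ
  have hQ : IsCompact (Set.univ.pi fun i : t => Metric.closedBall (0 : ℂ) (C i)) :=
    isCompact_univ_pi fun i => isCompact_closedBall _ _
  have hsub : Φ '' G ⊆ Set.univ.pi fun i : t => Metric.closedBall (0 : ℂ) (C i) := by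
    rintro _ ⟨g, hg, rfl⟩ i _
    simpa [Complex.dist_eq] using hC i (htK i i.2) g hg
  have htb : TotallyBounded (Φ '' G) := hQ.totallyBounded.subset hsub
  rw [totallyBounded_iff_subset] at htb
  obtain ⟨u, husub, hufin, hucov⟩ := htb _ (Metric.dist_mem_uniformity hε3)
  have hchoice : ∀ y ∈ u, ∃ g ∈ G, Φ g = y := fun y hy => by
    obtain ⟨g, hg, hgy⟩ := husub hy; exact ⟨g, hg, hgy⟩
  choose! ψ hψG hψ using hchoice
  refine ⟨ψ '' u, hufin.image ψ, fun g hg => ?_⟩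
  obtain ⟨y, hy⟩ := Set.mem_iUnion.1 (hucov ⟨g, hg, rfl⟩)
  obtain ⟨hyu, hdy⟩ := Set.mem_iUnion.1 hy
  refine ⟨ψ y, ⟨y, hyu, rfl⟩, fun x hx => ?_⟩
  obtain ⟨i, hit, hxball⟩ := Set.mem_iUnion₂.1 (hcover hx)
  have hiK : (i : M) ∈ K := htK i hit
  have h1 : ‖g x - g i‖ ≤ ε / 3 := hδ i hiK g hg x hxball
  have h3 : ‖ψ y x - ψ y i‖ ≤ ε / 3 := hδ i hiK (ψ y) (hψG y hyu) x hxball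
  have h2 : ‖g i - ψ y i‖ ≤ ε / 3 := by
    have : dist (Φ g) (Φ (ψ y)) < ε / 3 := by rw [hψ y hyu]; exact hdy
    have := le_trans (dist_le_pi_dist (Φ g) (Φ (ψ y)) ⟨i, hit⟩) this.le
    simpa [Φ, Complex.dist_eq] using this
  calc ‖g x - ψ y x‖ ≤ ‖g x - g i‖ + ‖g i - ψ y i‖ + ‖ψ y i - ψ y x‖ := by
        have := norm_add₃_le (a := g x - g ↑i) (b := g ↑i - ψ y ↑i) (c := ψ y ↑i - ψ y x)
        simpa using this
    _ ≤ ε / 3 + ε / 3 + ε / 3 := by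
        have h3' : ‖ψ y i - ψ y x‖ ≤ ε / 3 := by
          first | exact h3 | (rw [norm_sub_rev]; exact h3)
        exact add_le_add (add_le_add h1 h2) h3'
    _ = ε := by ring

lemma bound_lemma {M : Type*} (w : M → ℝ)
    (hnn : ∀ t, 0 ≤ w t) (hsum : ∑ᶠ t, w t = 1)
    (hfin : (Function.support w).Finite)
    (f : M → ℂ) (v : ℂ) (c : ℝ)
    (hdiff : ∀ t, w t ≠ 0 → ‖f t - v‖ ≤ c) :
    ‖(∑ᶠ t, f t * (w t : ℂ)) - v‖ ≤ c := by
  classical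
  set s : Finset M := hfin.toFinset with hs
  have hws : ∑ t ∈ s, w t = 1 := by
    rw [← hsum]
    exact (finsum_eq_finset_sum_of_support_subset _ (by simp [hs])).symm
  have hfs : ∑ᶠ t, f t * (w t : ℂ) = ∑ t ∈ s, f t * (w t : ℂ) := by
    refine finsum_eq_finset_sum_of_support_subset _ ?_
    intro t ht
    have : w t ≠ 0 := by
      intro h; apply ht; simp [h]
    simpa [hs, Function.mem_support] using this
  have hv : v = ∑ t ∈ s, v * (w t : ℂ) := by
    have : (∑ t ∈ s, (w t : ℂ)) = 1 := by
      push_cast [← Complex.ofReal_sum]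
      exact_mod_cast congrArg (Complex.ofReal) hws
    rw [← Finset.mul_sum, this, mul_one]
  rw [hfs]
  calc ‖(∑ t ∈ s, f t * (w t : ℂ)) - v‖
      = ‖∑ t ∈ s, (f t - v) * (w t : ℂ)‖ := by
        congr 1
        simp only [sub_mul, Finset.sum_sub_distrib, ← hv]
    _ ≤ ∑ t ∈ s, ‖(f t - v) * (w t : ℂ)‖ := norm_sum_le _ _
    _ ≤ ∑ t ∈ s, c * w t := by
        refine Finset.sum_le_sum fun t ht => ?_
        have hwt : w t ≠ 0 := by simpa [hs, Function.mem_support] using ht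
        rw [norm_mul, Complex.norm_real, Real.norm_eq_abs, abs_of_nonneg (hnn t)]
        exact mul_le_mul_of_nonneg_right (hdiff t hwt) (hnn t)
    _ = c := by rw [← Finset.mul_sum, hws, mul_one]

lemma Pk_lemma {M : Type*} [MetricSpace M] (w : M → M → ℝ)
    (hcont : ∀ t, Continuous (w t))
    (hnn : ∀ t x, 0 ≤ w t x) (hle : ∀ t x, w t x ≤ 1)
    (hlf : LocallyFinite fun t => Function.support (w t))
    (C : M → ℝ) (hC0 : ∀ t, 0 ≤ C t)
    (F : Set (M → ℂ)) (hCb : ∀ t : M, ∀ f ∈ F, ‖f t‖ ≤ C t)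
    (x : M) :
    (∃ B : ℝ, ∀ f ∈ F, ‖∑ᶠ t, f t * (w t x : ℂ)‖ ≤ B) ∧
    (∀ ε : ℝ, 0 < ε → ∃ δ > 0, ∀ f ∈ F, ∀ y, dist y x < δ →
      ‖(∑ᶠ t, f t * (w t y : ℂ)) - ∑ᶠ t, f t * (w t x : ℂ)‖ ≤ ε) := by
  classical
  obtain ⟨U, hU, hUfin⟩ := hlf x
  set T : Finset M := hUfin.toFinset with hT
  have key : ∀ y ∈ U, ∀ f : M → ℂ, ∑ᶠ t, f t * (w t y : ℂ) = ∑ t ∈ T, f t * (w t y : ℂ) := by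
    intro y hy f
    refine finsum_eq_finset_sum_of_support_subset _ ?_
    intro t ht
    have hw : w t y ≠ 0 := by
      intro h; apply ht; simp [h]
    have : (Function.support (w t) ∩ U).Nonempty := ⟨y, hw, hy⟩
    simpa [hT] using this
  have hxU : x ∈ U := mem_of_mem_nhds hU
  constructor
  · refine ⟨∑ t ∈ T, C t, fun f hf => ?_⟩
    rw [key x hxU f]
    calc ‖∑ t ∈ T, f t * (w t x : ℂ)‖ ≤ ∑ t ∈ T, ‖f t * (w t x : ℂ)‖ := norm_sum_le _ _
      _ ≤ ∑ t ∈ T, C t := by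
          refine Finset.sum_le_sum fun t _ => ?_
          rw [norm_mul, Complex.norm_real, Real.norm_eq_abs, abs_of_nonneg (hnn t x)]
          calc ‖f t‖ * w t x ≤ C t * 1 :=
                mul_le_mul (hCb t f hf) (hle t x) (hnn t x) (hC0 t)
            _ = C t := mul_one _
  · intro ε hε
    set φ : M → ℝ := fun y => ∑ t ∈ T, C t * |w t y - w t x| with hφ
    have hφcont : Continuous φ := by
      apply continuous_finset_sum
      intro t _
      exact continuous_const.mul ((hcont t).sub continuous_const).abs
    have hφx : φ x = 0 := by simp [hφ]
    have : ContinuousAt φ x := hφcont.continuousAt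
    rw [Metric.continuousAt_iff] at this
    obtain ⟨δ₁, hδ₁pos, hδ₁⟩ := this ε hε
    obtain ⟨δ₂, hδ₂pos, hδ₂⟩ := Metric.mem_nhds_iff.1 hU
    refine ⟨min δ₁ δ₂, lt_min hδ₁pos hδ₂pos, fun f hf y hy => ?_⟩
    have hyU : y ∈ U := hδ₂ (lt_of_lt_of_le hy (min_le_right _ _))
    have hφy : φ y < ε := by
      have := hδ₁ (lt_of_lt_of_le hy (min_le_left _ _))
      rwa [Real.dist_eq, hφx, sub_zero, abs_of_nonneg (Finset.sum_nonneg fun t _ =>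
        mul_nonneg (hC0 t) (abs_nonneg _))] at this
    rw [key y hyU f, key x hxU f]
    calc ‖(∑ t ∈ T, f t * (w t y : ℂ)) - ∑ t ∈ T, f t * (w t x : ℂ)‖
        = ‖∑ t ∈ T, f t * ((w t y : ℂ) - w t x)‖ := by
          congr 1
          rw [← Finset.sum_sub_distrib]
          exact Finset.sum_congr rfl fun t _ => by ring
      _ ≤ ∑ t ∈ T, ‖f t * ((w t y : ℂ) - w t x)‖ := norm_sum_le _ _
      _ ≤ φ y := by
          refine Finset.sum_le_sum fun t _ => ?_
          rw [norm_mul]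
          have : ‖(w t y : ℂ) - w t x‖ = |w t y - w t x| := by
            rw [← Complex.ofReal_sub, Complex.norm_real, Real.norm_eq_abs]
          rw [this]
          exact mul_le_mul_of_nonneg_right (hCb t f hf) (abs_nonneg _)
      _ ≤ ε := hφy.le

end Aux

/-- If `F` is equicontinuous and uniformly bounded on each compact subset of `M`, and
`P^k f x = ∑ t, f t * η^k t x` comes from locally finite partitions of unity
subordinated to the covers by balls of radius `1/k`, then the set
`⋃_{k ≥ 1} {P^k f − f : f ∈ F} ∪ {0}` is totally bounded for the topology of uniform
convergence on compact sets. -/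
theorem union_of_differences_totallyBounded
    {M : Type*} [MetricSpace M] (η : ℕ → M → M → ℝ)
    (hcont : ∀ k, 1 ≤ k → ∀ t, Continuous (η k t))
    (hnonneg : ∀ k, 1 ≤ k → ∀ t x, 0 ≤ η k t x)
    (hle : ∀ k, 1 ≤ k → ∀ t x, η k t x ≤ 1)
    (hlf : ∀ k, 1 ≤ k → LocallyFinite fun t => Function.support (η k t))
    (hsum : ∀ k, 1 ≤ k → ∀ x, ∑ᶠ t, η k t x = 1)
    (hsupp : ∀ k, 1 ≤ k → ∀ t, Function.support (η k t) ⊆ Metric.ball t (1 / (k : ℝ)))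
    (F : Set (M → ℂ)) (hFc : ∀ f ∈ F, Continuous f)
    (hEq : ∀ K : Set M, IsCompact K → ∀ x ∈ K,
      EquicontinuousAt (fun f : F => (f : M → ℂ)) x)
    (hBd : ∀ K : Set M, IsCompact K → ∃ C : ℝ, ∀ f ∈ F, ∀ x ∈ K, ‖f x‖ ≤ C) :
    ∀ K : Set M, IsCompact K → ∀ ε > (0 : ℝ), ∃ S : Set (M → ℂ), S.Finite ∧
      ∀ g ∈ ({0} ∪ ⋃ k ∈ {k : ℕ | 1 ≤ k},
          (fun f : M → ℂ => (fun x => ∑ᶠ t, f t * (η k t x : ℂ)) - f) '' F :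
          Set (M → ℂ)),
        ∃ h ∈ S, ∀ x ∈ K, ‖g x - h x‖ ≤ ε := by
  classical
  intro K hK ε hε
  -- trivial case of empty K
  rcases K.eq_empty_or_nonempty with rfl | hKne
  · exact ⟨{0}, Set.finite_singleton _, fun g _ =>
      ⟨0, Set.mem_singleton _, fun x hx => absurd hx (Set.notMem_empty x)⟩⟩
  -- pointwise equicontinuity everywhere
  have hEqpt : ∀ x : M, ∀ ε' : ℝ, 0 < ε' → ∃ δ > 0, ∀ f ∈ F, ∀ y, dist y x < δ →
      ‖f y - f x‖ ≤ ε' := by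
    intro x ε' hε'
    have := hEq {x} isCompact_singleton x rfl
    rw [Metric.equicontinuousAt_iff] at this
    obtain ⟨δ, hδpos, hδ⟩ := this ε' hε'
    refine ⟨δ, hδpos, fun f hf y hy => ?_⟩
    have := hδ y hy ⟨f, hf⟩
    rw [Complex.dist_eq] at this
    rw [norm_sub_rev]
    exact this.le
  -- pointwise bounds (nonnegative)
  have hBdpt : ∀ t : M, ∃ C : ℝ, 0 ≤ C ∧ ∀ f ∈ F, ‖f t‖ ≤ C := by
    intro t
    obtain ⟨C, hC⟩ := hBd {t} isCompact_singleton
    exact ⟨max C 0, le_max_right _ _, fun f hf =>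
      le_trans (hC f hf t rfl) (le_max_left _ _)⟩
  choose C hC0 hCb using hBdpt
  -- uniform equicontinuity on K
  have hunif : ∃ δ > 0, ∀ f ∈ F, ∀ x ∈ K, ∀ t, dist t x < δ → ‖f t - f x‖ ≤ ε := by
    have h2 : ∀ x : M, ∃ δ > 0, ∀ f ∈ F, ∀ y, dist y x < δ → ‖f y - f x‖ ≤ ε / 2 :=
      fun x => hEqpt x _ (by positivity)
    choose δ hδpos hδ using h2
    obtain ⟨u, huK, hcover⟩ := hK.elim_nhds_subcover (fun x => Metric.ball x (δ x / 2))
      (fun x _ => Metric.ball_mem_nhds _ (half_pos (hδpos x)))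
    have hune : u.Nonempty := by
      by_contra hemp
      rw [Finset.not_nonempty_iff_eq_empty] at hemp
      obtain ⟨x, hx⟩ := hKne
      simpa [hemp] using hcover hx
    refine ⟨u.inf' hune (fun x => δ x / 2), ?_, ?_⟩
    · exact (Finset.lt_inf'_iff hune).mpr fun i _ => half_pos (hδpos i)
    · intro f hf x hx t ht
      obtain ⟨i, hit, hxball⟩ := Set.mem_iUnion₂.1 (hcover hx)
      have hδmin : u.inf' hune (fun x => δ x / 2) ≤ δ i / 2 := Finset.inf'_le _ hit
      have hxi : dist x i < δ i / 2 := by simpa [Metric.mem_ball] using hxball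
      have hti : dist t i < δ i := by
        calc dist t i ≤ dist t x + dist x i := dist_triangle _ _ _
          _ < δ i / 2 + δ i / 2 := add_lt_add (lt_of_lt_of_le ht hδmin) hxi
          _ = δ i := by ring
      calc ‖f t - f x‖ ≤ ‖f t - f i‖ + ‖f i - f x‖ := by
            have := norm_add_le (f t - f i) (f i - f x); simpa using this
        _ ≤ ε / 2 + ε / 2 := by
            refine add_le_add (hδ i f hf t hti) ?_
            rw [norm_sub_rev]
            exact hδ i f hf x (hxi.trans_le (half_le_self (hδpos i).le))
        _ = ε := by ring
  obtain ⟨δ, hδpos, hδ⟩ := hunif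
  obtain ⟨n, hn⟩ := exists_nat_one_div_lt hδpos
  set k₀ : ℕ := n + 1 with hk₀
  have hk₀pos : 1 ≤ k₀ := Nat.le_add_left _ _
  -- Step 1 : large k
  have step1 : ∀ k, k₀ ≤ k → ∀ f ∈ F, ∀ x ∈ K,
      ‖(∑ᶠ t, f t * (η k t x : ℂ)) - f x‖ ≤ ε := by
    intro k hkk₀ f hf x hx
    have hk1 : 1 ≤ k := le_trans hk₀pos hkk₀
    have hfin : (Function.support fun t => η k t x).Finite := by
      have := (hlf k hk1).point_finite x
      convert this using 1
      ext t; rfl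
    refine bound_lemma (fun t => η k t x) (fun t => hnonneg k hk1 t x)
      (hsum k hk1 x) hfin f (f x) ε ?_
    intro t hwt
    have hxball : x ∈ Metric.ball t (1 / (k : ℝ)) := hsupp k hk1 t hwt
    have hdtx : dist t x < δ := by
      rw [Metric.mem_ball, dist_comm] at hxball
      have h1 : (1 : ℝ) / k ≤ 1 / ((n : ℝ) + 1) := by
        rw [hk₀] at hkk₀
        have hnk : ((n : ℝ) + 1) ≤ k := by exact_mod_cast hkk₀
        exact one_div_le_one_div_of_le (by positivity) hnk
      exact lt_of_lt_of_le (lt_of_lt_of_le hxball h1) hn.le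
    exact hδ f hf x hx t hdtx
  -- Step 2 : each fixed k, via the net lemma
  have step2 : ∀ k, 1 ≤ k → ∃ S : Set (M → ℂ), S.Finite ∧ ∀ f ∈ F, ∃ h ∈ S, ∀ x ∈ K,
      ‖((∑ᶠ t, f t * (η k t x : ℂ)) - f x) - h x‖ ≤ ε := by
    intro k hk1
    set G : Set (M → ℂ) :=
      (fun f : M → ℂ => (fun x => ∑ᶠ t, f t * (η k t x : ℂ)) - f) '' F with hG
    have hP := Pk_lemma (η k) (hcont k hk1) (hnonneg k hk1) (hle k hk1) (hlf k hk1)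
      C hC0 F hCb
    have heqG : ∀ x ∈ K, ∀ ε' : ℝ, 0 < ε' → ∃ d > 0, ∀ g ∈ G, ∀ y, dist y x < d →
        ‖g y - g x‖ ≤ ε' := by
      intro x _ ε' hε'
      obtain ⟨d₁, hd₁pos, hd₁⟩ := (hP x).2 (ε' / 2) (by positivity)
      obtain ⟨d₂, hd₂pos, hd₂⟩ := hEqpt x (ε' / 2) (by positivity)
      refine ⟨min d₁ d₂, lt_min hd₁pos hd₂pos, ?_⟩
      rintro _ ⟨f, hf, rfl⟩ y hy
      have h1 := hd₁ f hf y (lt_of_lt_of_le hy (min_le_left _ _))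
      have h2 := hd₂ f hf y (lt_of_lt_of_le hy (min_le_right _ _))
      have : ((fun x => ∑ᶠ t, f t * (η k t x : ℂ)) - f) y -
          ((fun x => ∑ᶠ t, f t * (η k t x : ℂ)) - f) x =
          ((∑ᶠ t, f t * (η k t y : ℂ)) - ∑ᶠ t, f t * (η k t x : ℂ)) - (f y - f x) := by
        simp [Pi.sub_apply]; ring
      rw [this]
      calc ‖((∑ᶠ t, f t * (η k t y : ℂ)) - ∑ᶠ t, f t * (η k t x : ℂ)) - (f y - f x)‖
          ≤ ‖(∑ᶠ t, f t * (η k t y : ℂ)) - ∑ᶠ t, f t * (η k t x : ℂ)‖ + ‖f y - f x‖ :=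
            norm_sub_le _ _
        _ ≤ ε' / 2 + ε' / 2 := add_le_add h1 h2
        _ = ε' := by ring
    have hbdG : ∀ x ∈ K, ∃ B : ℝ, ∀ g ∈ G, ‖g x‖ ≤ B := by
      intro x _
      obtain ⟨B, hB⟩ := (hP x).1
      refine ⟨B + C x, ?_⟩
      rintro _ ⟨f, hf, rfl⟩
      calc ‖((fun x => ∑ᶠ t, f t * (η k t x : ℂ)) - f) x‖
          = ‖(∑ᶠ t, f t * (η k t x : ℂ)) - f x‖ := rfl
        _ ≤ ‖∑ᶠ t, f t * (η k t x : ℂ)‖ + ‖f x‖ := norm_sub_le _ _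
        _ ≤ B + C x := add_le_add (hB f hf) (hCb x f hf)
    obtain ⟨S, hSfin, hScov⟩ := net_lemma K hK G heqG hbdG hε
    refine ⟨S, hSfin, fun f hf => ?_⟩
    obtain ⟨h, hhS, hh⟩ := hScov _ ⟨f, hf, rfl⟩
    exact ⟨h, hhS, fun x hx => hh x hx⟩
  -- assemble the finite set
  have hSall : ∀ k : ℕ, ∃ S : Set (M → ℂ), S.Finite ∧ (1 ≤ k → ∀ f ∈ F, ∃ h ∈ S, ∀ x ∈ K,
      ‖((∑ᶠ t, f t * (η k t x : ℂ)) - f x) - h x‖ ≤ ε) := by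
    intro k
    by_cases hk : 1 ≤ k
    · obtain ⟨S, h1, h2⟩ := step2 k hk
      exact ⟨S, h1, fun _ => h2⟩
    · exact ⟨∅, Set.finite_empty, fun h => absurd h hk⟩
  choose Sf hSfin hScov using hSall
  refine ⟨insert 0 (⋃ k ∈ Finset.range k₀, Sf k),
    Set.Finite.insert _ ((Finset.range k₀).finite_toSet.biUnion fun k _ => hSfin k), ?_⟩
  intro g hg
  rcases hg with hg0 | hgU
  · refine ⟨0, Set.mem_insert _ _, fun x _ => ?_⟩
    rw [Set.mem_singleton_iff] at hg0
    simpa [hg0] using hε.le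
  · obtain ⟨k, hk⟩ := Set.mem_iUnion.1 hgU
    obtain ⟨hk1, hgk⟩ := Set.mem_iUnion.1 hk
    obtain ⟨f, hfF, rfl⟩ := hgk
    have hk1' : 1 ≤ k := hk1
    by_cases hkk : k < k₀
    · obtain ⟨h, hhS, hh⟩ := hScov k hk1' f hfF
      refine ⟨h, Set.mem_insert_of_mem _ ?_, fun x hx => ?_⟩
      · exact Set.mem_biUnion (Finset.mem_range.mpr hkk) hhS
      · exact hh x hx
    · push_neg at hkk
      refine ⟨0, Set.mem_insert _ _, fun x hx => ?_⟩
      have := step1 k hkk f hfF x hx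
      simpa using this
end
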